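/- Every joincompact bitopological ordered space is pairwise normally ordered: for every decreasing τ₁-closed set A and increasing τ₂-closed set B with A ∩ B = ∅, there exist a decreasing τ₂-open set containing A and an increasing τ₁-open set containing B which are disjoint. -/

import Mathlib

open Topology

/-- Separation of a `τ₁`-compact set from a `τ₂`-compact set lying entirely
off the order relation, using closedness of `≤` in `τ₁ × τ₂`. -/
private lemma sep_aux {X : Type*} [PartialOrder X] (τ₁ τ₂ : TopologicalSpace X)
    (hcl : @IsClosed (X × X) (@instTopologicalSpaceProd X X τ₁ τ₂)
      {p : X × X | p.1 ≤ p.2})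
    {S T : Set X} (hS : @IsCompact X τ₁ S) (hT : @IsCompact X τ₂ T)
    (h : ∀ s ∈ S, ∀ t ∈ T, ¬ s ≤ t) :
    ∃ U V : Set X, @IsOpen X τ₁ U ∧ @IsOpen X τ₂ V ∧ S ⊆ U ∧ T ⊆ V ∧
      ∀ u ∈ U, ∀ v ∈ V, ¬ u ≤ v := by
  have hn : @IsOpen (X × X) (@instTopologicalSpaceProd X X τ₁ τ₂)
      {p : X × X | p.1 ≤ p.2}ᶜ := hcl.isOpen_compl
  have hp : S ×ˢ T ⊆ {p : X × X | p.1 ≤ p.2}ᶜ := by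
    rintro ⟨s, t⟩ ⟨hs, ht⟩
    exact h s hs t ht
  obtain ⟨U, V, hU, hV, hSU, hTV, hUV⟩ :=
    @generalized_tube_lemma X X τ₁ τ₂ S hS T hT _ hn hp
  exact ⟨U, V, hU, hV, hSU, hTV, fun u hu v hv hle => hUV (show (u, v) ∈ U ×ˢ V from ⟨hu, hv⟩) hle⟩

private lemma closed_of_open_compl {X : Type*} {τ : TopologicalSpace X} {s : Set X}
    (h : @IsOpen X τ sᶜ) : @IsClosed X τ s := by
  simpa using @IsOpen.isClosed_compl X τ sᶜ h

private lemma open_compl_of_closed {X : Type*} {τ : TopologicalSpace X} {s : Set X}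
    (h : @IsClosed X τ s) : @IsOpen X τ sᶜ := @IsClosed.isOpen_compl X τ s h

private lemma compact_of_le {X : Type*} {τ τ' : TopologicalSpace X} (h : τ ≤ τ')
    {s : Set X} (hs : @IsCompact X τ s) : @IsCompact X τ' s := by
  have hc : @Continuous X X τ τ' id := continuous_id_of_le h
  simpa using @IsCompact.image X X τ τ' s id hs hc

/-- Every joincompact bitopological ordered space (partial order closed in
`τ₁ × τ₂`, join topology `τ₁ ∨ τ₂ = τ₁ ⊓ τ₂` compact and Hausdorff) is pairwise normally
ordered: disjoint decreasing `τ₁`-closed `A` and increasing `τ₂`-closed `B` can be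
separated by a decreasing `τ₂`-open set and an increasing `τ₁`-open set. -/
theorem stmt11 {X : Type*} [PartialOrder X] (τ₁ τ₂ : TopologicalSpace X)
    (hcl : @IsClosed (X × X) (@instTopologicalSpaceProd X X τ₁ τ₂)
      {p : X × X | p.1 ≤ p.2})
    (hjc : @CompactSpace X (τ₁ ⊓ τ₂)) (hT2 : @T2Space X (τ₁ ⊓ τ₂)) :
    ∀ A B : Set X,
      (∀ x y, x ∈ A → y ≤ x → y ∈ A) → @IsClosed X τ₁ A →
      (∀ x y, x ∈ B → x ≤ y → y ∈ B) → @IsClosed X τ₂ B →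
      A ∩ B = ∅ →
      ∃ O₁ O₂ : Set X, @IsOpen X τ₂ O₁ ∧ (∀ x y, x ∈ O₁ → y ≤ x → y ∈ O₁) ∧ A ⊆ O₁ ∧
        @IsOpen X τ₁ O₂ ∧ (∀ x y, x ∈ O₂ → x ≤ y → y ∈ O₂) ∧ B ⊆ O₂ ∧
        O₁ ∩ O₂ = ∅ := by
  intro A B hAdec hAcl hBinc hBcl hAB
  -- Any set closed in τ₁ or τ₂ is compact in both τ₁ and τ₂.
  have key : ∀ s : Set X, @IsClosed X (τ₁ ⊓ τ₂) s →
      @IsCompact X τ₁ s ∧ @IsCompact X τ₂ s := by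
    intro s hs
    have hc : @IsCompact X (τ₁ ⊓ τ₂) s := @IsClosed.isCompact X (τ₁ ⊓ τ₂) s hjc hs
    exact ⟨compact_of_le (inf_le_left : τ₁ ⊓ τ₂ ≤ τ₁) hc, compact_of_le (inf_le_right : τ₁ ⊓ τ₂ ≤ τ₂) hc⟩
  have hcl1 : ∀ s : Set X, @IsClosed X τ₁ s → @IsClosed X (τ₁ ⊓ τ₂) s := by
    intro s hs
    exact closed_of_open_compl (IsOpen.mono (open_compl_of_closed hs) inf_le_left)
  have hcl2 : ∀ s : Set X, @IsClosed X τ₂ s → @IsClosed X (τ₁ ⊓ τ₂) s := by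
    intro s hs
    exact closed_of_open_compl (IsOpen.mono (open_compl_of_closed hs) inf_le_right)
  -- B is τ₁-compact, A is τ₂-compact.
  have hBc : @IsCompact X τ₁ B := (key B (hcl2 B hBcl)).1
  have hAc : @IsCompact X τ₂ A := (key A (hcl1 A hAcl)).2
  -- No b ∈ B lies below any a ∈ A.
  have hBA : ∀ b ∈ B, ∀ a ∈ A, ¬ b ≤ a := by
    intro b hb a ha hba
    have : b ∈ A := hAdec a b ha hba
    exact absurd (Set.mem_inter this hb) (by rw [hAB]; exact Set.notMem_empty b)
  obtain ⟨U, V, hU, hV, hBU, hAV, hUV⟩ := sep_aux τ₁ τ₂ hcl hBc hAc hBA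
  -- The complements of U and V are compact in both topologies.
  have hVc : @IsCompact X τ₁ Vᶜ ∧ @IsCompact X τ₂ Vᶜ :=
    key Vᶜ (hcl2 Vᶜ (closed_of_open_compl (by simpa using hV)))
  have hUc : @IsCompact X τ₁ Uᶜ ∧ @IsCompact X τ₂ Uᶜ :=
    key Uᶜ (hcl1 Uᶜ (closed_of_open_compl (by simpa using hU)))
  refine ⟨{y | ∀ s ∉ V, ¬ s ≤ y}, {x | ∀ t ∉ U, ¬ x ≤ t}, ?_, ?_, ?_, ?_, ?_, ?_, ?_⟩
  · -- τ₂-open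
    rw [@isOpen_iff_forall_mem_open X τ₂ _]
    intro y hy
    obtain ⟨U', V', hU', hV', hCU', hyV', hkey⟩ :=
      sep_aux τ₁ τ₂ hcl hVc.1 (@isCompact_singleton X τ₂ y)
        (fun s hs t ht => by rw [Set.mem_singleton_iff] at ht; subst ht; exact hy s hs)
    refine ⟨V', fun v hv s hs hsv => hkey s (hCU' hs) v hv hsv, hV', hyV' rfl⟩
  · -- decreasing
    intro x y hx hyx s hs hsy
    exact hx s hs (hsy.trans hyx)
  · -- contains A
    intro a ha s hs hsa
    exact hs (hAV (hAdec a s ha hsa))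
  · -- τ₁-open
    rw [@isOpen_iff_forall_mem_open X τ₁ _]
    intro x hx
    obtain ⟨U', V', hU', hV', hxU', hDV', hkey⟩ :=
      sep_aux τ₁ τ₂ hcl (@isCompact_singleton X τ₁ x) hUc.2
        (fun s hs t ht => by rw [Set.mem_singleton_iff] at hs; subst hs; exact hx t ht)
    refine ⟨U', fun u hu t ht hut => hkey u hu t (hDV' ht) hut, hU', hxU' rfl⟩
  · -- increasing
    intro x y hx hxy t ht hyt
    exact hx t ht (hxy.trans hyt)
  · -- contains B
    intro b hb t ht hbt
    exact ht (hBU (hBinc b t hb hbt))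
  · -- disjoint
    ext x
    simp only [Set.mem_inter_iff, Set.mem_setOf_eq, Set.mem_empty_iff_false, iff_false,
      not_and]
    intro h1 h2
    by_contra _
    have hxV : x ∈ V := by
      by_contra hxV
      exact h1 x hxV le_rfl
    have hxU : x ∈ U := by
      by_contra hxU
      exact h2 x hxU le_rfl
    exact hUV x hxU x hxV le_rfl
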